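/- Assume A is Hurwitz. Let Y ∈ ℝ^{n×n} be symmetric positive definite and let S ∈ ℝ^{n×n} be symmetric positive definite with A^⊤S + SA = −Y. Let π* ∈ ℝ^{n_p} with Q_p π* ≠ 0, and let γ be a real number with 0 < γ < λ_min(Y) / (4‖SB‖·‖Q_p π*‖). Then, setting π = γ·π*, the matrix F̄(π) = A + B H̄(π) is Hurwitz. -/

import Mathlib

open Matrix
noncomputable section

/-- A real square matrix is Hurwitz if every complex eigenvalue has strictly negative
real part. -/
def IsHurwitz {ι : Type*} [Fintype ι] (M : Matrix ι ι ℝ) : Prop :=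
  ∀ (μ : ℂ) (v : ι → ℂ), v ≠ 0 → (M.map Complex.ofReal) *ᵥ v = μ • v → μ.re < 0

/-- Spectral norm: operator norm induced by the Euclidean norms. -/
def opNorm {m n : Type*} [Fintype m] [Fintype n] [DecidableEq n] (M : Matrix m n ℝ) : ℝ :=
  ‖(Matrix.toEuclideanLin M).toContinuousLinearMap‖

/-- Euclidean norm of a real vector. -/
def evnorm {n : Type*} [Fintype n] (v : n → ℝ) : ℝ :=
  Real.sqrt (∑ i, (v i) ^ 2)

variable {np nc : ℕ}

/-- `A = [[A_p, B_p C_c],[0, A_c]]`. -/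
def Amat (Ap : Matrix (Fin np) (Fin np) ℝ) (Ac : Matrix (Fin nc) (Fin nc) ℝ)
    (Bp : Matrix (Fin np) (Fin 1) ℝ) (Cc : Matrix (Fin 1) (Fin nc) ℝ) :
    Matrix (Fin np ⊕ Fin nc) (Fin np ⊕ Fin nc) ℝ :=
  Matrix.fromBlocks Ap (Bp * Cc) 0 Ac

/-- `B = [B_p D_c; B_c]`. -/
def Bmat (Bp : Matrix (Fin np) (Fin 1) ℝ) (Bc : Matrix (Fin nc) (Fin 1) ℝ) (Dc : ℝ) :
    Matrix (Fin np ⊕ Fin nc) (Fin 1) ℝ :=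
  Matrix.fromRows (Dc • Bp) Bc

/-- `H̄(π) = [2 π^⊤ Q_p, 0]`. -/
def Hbar (Qp : Matrix (Fin np) (Fin np) ℝ) (π : Fin np → ℝ) :
    Matrix (Fin 1) (Fin np ⊕ Fin nc) ℝ :=
  Matrix.of fun _ j => Sum.elim (fun i => 2 * (π ᵥ* Qp) i) (fun _ => 0) j

/-- `F̄(π) = A + B H̄(π)`. -/
def Fbar (Ap : Matrix (Fin np) (Fin np) ℝ) (Ac : Matrix (Fin nc) (Fin nc) ℝ)
    (Bp : Matrix (Fin np) (Fin 1) ℝ) (Bc : Matrix (Fin nc) (Fin 1) ℝ)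
    (Cc : Matrix (Fin 1) (Fin nc) ℝ) (Dc : ℝ)
    (Qp : Matrix (Fin np) (Fin np) ℝ) (π : Fin np → ℝ) :
    Matrix (Fin np ⊕ Fin nc) (Fin np ⊕ Fin nc) ℝ :=
  Amat Ap Ac Bp Cc + Bmat Bp Bc Dc * Hbar Qp π

/- ## Auxiliary lemmas -/

lemma evnorm_eq_norm {n : Type*} [Fintype n] (v : n → ℝ) :
    evnorm v = ‖(WithLp.equiv 2 (n → ℝ)).symm v‖ := by
  rw [EuclideanSpace.norm_eq]
  simp [evnorm, Real.norm_eq_abs, sq_abs]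

lemma evnorm_nonneg {n : Type*} [Fintype n] (v : n → ℝ) : 0 ≤ evnorm v :=
  Real.sqrt_nonneg _

lemma opNorm_mulVec {m n : Type*} [Fintype m] [Fintype n] [DecidableEq n]
    (M : Matrix m n ℝ) (x : n → ℝ) :
    evnorm (M *ᵥ x) ≤ opNorm M * evnorm x := by
  rw [evnorm_eq_norm, evnorm_eq_norm]
  have := (Matrix.toEuclideanLin M).toContinuousLinearMap.le_opNorm
    ((WithLp.equiv 2 (n → ℝ)).symm x)
  simpa [Matrix.toEuclideanLin_apply_piLp_toLp, opNorm] using this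

lemma cs_lemma {ι : Type*} [Fintype ι] (h : ι → ℝ) (v : ι → ℂ) :
    ‖∑ j, (h j : ℂ) * v j‖ ≤
      evnorm h * Real.sqrt (∑ j, ‖v j‖ ^ 2) := by
  let x : EuclideanSpace ℂ ι := (WithLp.equiv 2 (ι → ℂ)).symm (fun j => (h j : ℂ))
  let y : EuclideanSpace ℂ ι := (WithLp.equiv 2 (ι → ℂ)).symm v
  have hinner : (inner ℂ x y : ℂ) = ∑ j, (h j : ℂ) * v j := by
    simp [x, y, PiLp.inner_apply, RCLike.inner_apply, Complex.conj_ofReal, mul_comm]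
  have hx : ‖x‖ = evnorm h := by
    rw [EuclideanSpace.norm_eq]
    simp [x, evnorm, Complex.sq_norm, Complex.normSq_ofReal, sq_abs]
  have hy : ‖y‖ = Real.sqrt (∑ j, ‖v j‖ ^ 2) := by
    rw [EuclideanSpace.norm_eq]
    simp [y]
  calc ‖∑ j, (h j : ℂ) * v j‖ = ‖(inner ℂ x y : ℂ)‖ := by rw [hinner]
    _ ≤ ‖x‖ * ‖y‖ := norm_inner_le_norm x y
    _ = _ := by rw [hx, hy]

lemma rayleigh_lb {ι : Type*} [Fintype ι] [DecidableEq ι] [Nonempty ι]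
    {Y : Matrix ι ι ℝ} (hY : Y.IsHermitian) (x : ι → ℝ) :
    (⨅ i, hY.eigenvalues i) * (∑ i, x i ^ 2) ≤ x ⬝ᵥ Y *ᵥ x := by
  set U : Matrix ι ι ℝ := (hY.eigenvectorUnitary : Matrix ι ι ℝ)
  have hU1 : U * star U = 1 := (Matrix.mem_unitaryGroup_iff).mp hY.eigenvectorUnitary.2
  set w : ι → ℝ := star U *ᵥ x with hw
  have hxw : x ᵥ* U = w := by
    rw [hw, Matrix.star_eq_conjTranspose, Matrix.conjTranspose_eq_transpose_of_trivial,
      Matrix.mulVec_transpose]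
  have hw2 : ∑ i, w i ^ 2 = ∑ i, x i ^ 2 := by
    have : w ⬝ᵥ w = x ⬝ᵥ x := by
      calc w ⬝ᵥ w = (x ᵥ* U) ⬝ᵥ (star U *ᵥ x) := by rw [hxw]
        _ = x ⬝ᵥ (U *ᵥ (star U *ᵥ x)) := by rw [← Matrix.dotProduct_mulVec]
        _ = x ⬝ᵥ ((U * star U) *ᵥ x) := by rw [Matrix.mulVec_mulVec]
        _ = x ⬝ᵥ x := by rw [hU1, Matrix.one_mulVec]
    simpa [dotProduct, pow_two] using this
  have hquad : x ⬝ᵥ Y *ᵥ x = ∑ i, hY.eigenvalues i * w i ^ 2 := by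
    conv_lhs => rw [hY.spectral_theorem, Unitary.conjStarAlgAut_apply]
    rw [← Matrix.mulVec_mulVec, ← Matrix.mulVec_mulVec, Matrix.dotProduct_mulVec, hxw]
    simp [Matrix.mulVec_diagonal, dotProduct, pow_two]
    exact Finset.sum_congr rfl fun i _ => by ring
  rw [hquad, ← hw2, Finset.mul_sum]
  apply Finset.sum_le_sum
  intro i _
  have h1 : (⨅ j, hY.eigenvalues j) ≤ hY.eigenvalues i :=
    ciInf_le (Finite.bddBelow_range _) i
  nlinarith [sq_nonneg (w i)]

lemma cmap_mul {l m n : Type*} [Fintype m] (M : Matrix l m ℝ) (N : Matrix m n ℝ) :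
    (M * N).map Complex.ofReal = M.map Complex.ofReal * N.map Complex.ofReal := by
  ext i j
  simp [Matrix.map_apply, Matrix.mul_apply]

lemma cmap_add {m n : Type*} (M N : Matrix m n ℝ) :
    (M + N).map Complex.ofReal = M.map Complex.ofReal + N.map Complex.ofReal := by
  ext i j; simp [Matrix.map_apply]

lemma cmap_neg {m n : Type*} (M : Matrix m n ℝ) :
    (-M).map Complex.ofReal = -(M.map Complex.ofReal) := by
  ext i j; simp [Matrix.map_apply]

lemma re_quad {ι : Type*} [Fintype ι] (M : Matrix ι ι ℝ) (v : ι → ℂ) :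
    (star v ⬝ᵥ (M.map Complex.ofReal *ᵥ v)).re =
      (fun i => (v i).re) ⬝ᵥ (M *ᵥ fun i => (v i).re) +
      (fun i => (v i).im) ⬝ᵥ (M *ᵥ fun i => (v i).im) := by
  simp only [dotProduct, mulVec, Matrix.map_apply, Pi.star_apply, Finset.mul_sum,
    ← Finset.sum_add_distrib]
  rw [Complex.re_sum]
  apply Finset.sum_congr rfl
  intro i _
  rw [Complex.re_sum]
  apply Finset.sum_congr rfl
  intro j _
  simp [Complex.mul_re, Complex.mul_im]

lemma mulVec_star {ι κ : Type*} [Fintype κ] (M : Matrix ι κ ℝ) (v : κ → ℂ) :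
    (M.map Complex.ofReal) *ᵥ (star v) = star ((M.map Complex.ofReal) *ᵥ v) := by
  ext i
  simp [mulVec, dotProduct, Matrix.map_apply, map_sum, Complex.conj_ofReal, mul_comm]

lemma quad_transpose {ι : Type*} [Fintype ι] (M : Matrix ι ι ℝ) (v : ι → ℂ) :
    star v ⬝ᵥ ((Mᵀ.map Complex.ofReal) *ᵥ v) =
      starRingEnd ℂ (star v ⬝ᵥ ((M.map Complex.ofReal) *ᵥ v)) := by
  simp only [dotProduct, mulVec, Matrix.map_apply, Pi.star_apply, Matrix.transpose_apply,
    Finset.mul_sum, map_sum]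
  rw [Finset.sum_comm]
  apply Finset.sum_congr rfl
  intro i _
  apply Finset.sum_congr rfl
  intro j _
  simp [Complex.conj_ofReal, mul_comm, mul_left_comm]
  ring

lemma quad_rank_one {ι : Type*} [Fintype ι] (C : Matrix ι (Fin 1) ℝ)
    (R : Matrix (Fin 1) ι ℝ) (v : ι → ℂ) :
    star v ⬝ᵥ ((C * R).map Complex.ofReal *ᵥ v) =
      (∑ i, (starRingEnd ℂ) (v i) * (C i 0 : ℂ)) * (∑ j, (R 0 j : ℂ) * v j) := by
  rw [Finset.sum_mul_sum]
  simp only [dotProduct, mulVec, Matrix.map_apply, Matrix.mul_apply, Pi.star_apply,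
    Fin.sum_univ_one, Finset.mul_sum]
  apply Finset.sum_congr rfl
  intro i _
  apply Finset.sum_congr rfl
  intro j _
  simp only [Complex.star_def, Complex.ofReal_mul]
  ring


set_option maxHeartbeats 1000000 in
/-- Lemma 3, stability part: scaling `π = γ π*` with
`0 < γ < λ_min(Y)/(4‖SB‖‖Q_p π*‖)` keeps `F̄(π) = A + B H̄(π)` Hurwitz. -/
theorem Fbar_hurwitz_of_scaled_pi
    (Ap : Matrix (Fin np) (Fin np) ℝ) (Ac : Matrix (Fin nc) (Fin nc) ℝ)
    (Bp : Matrix (Fin np) (Fin 1) ℝ) (Bc : Matrix (Fin nc) (Fin 1) ℝ)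
    (Cc : Matrix (Fin 1) (Fin nc) ℝ) (Dc : ℝ)
    (Qp : Matrix (Fin np) (Fin np) ℝ) (hQp : Qp.IsSymm)
    (hA : IsHurwitz (Amat Ap Ac Bp Cc))
    (Y S : Matrix (Fin np ⊕ Fin nc) (Fin np ⊕ Fin nc) ℝ) (hY : Y.PosDef) (hS : S.PosDef)
    (hLyap : (Amat Ap Ac Bp Cc)ᵀ * S + S * Amat Ap Ac Bp Cc = -Y)
    (πstar : Fin np → ℝ) (hπstar : Qp *ᵥ πstar ≠ 0)
    (γ : ℝ) (hγ0 : 0 < γ)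
    (hγ : γ < (⨅ i, hY.1.eigenvalues i) /
      (4 * opNorm (S * Bmat Bp Bc Dc) * evnorm (Qp *ᵥ πstar))) :
    IsHurwitz (Fbar Ap Ac Bp Bc Cc Dc Qp (γ • πstar)) := by
  intro μ v hv hveq
  rcases isEmpty_or_nonempty (Fin np ⊕ Fin nc) with hemp | hne
  · exact absurd (funext fun i => hemp.elim i) hv
  set A := Amat Ap Ac Bp Cc with hA'
  set Bm := Bmat Bp Bc Dc with hBm
  set H := Hbar (nc := nc) Qp (γ • πstar) with hH
  set q : Fin np → ℝ := Qp *ᵥ πstar with hq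
  set u : (Fin np ⊕ Fin nc) → ℝ := fun i => (S * Bm) i 0 with hu
  set hvec : (Fin np ⊕ Fin nc) → ℝ := fun j => H 0 j with hhvec
  -- the H row vector
  have hvq : (γ • πstar) ᵥ* Qp = γ • q := by
    rw [Matrix.smul_vecMul, hq, ← Matrix.mulVec_transpose, hQp]
  have hHval : hvec = Sum.elim (fun i => 2 * γ * q i) (fun _ => 0) := by
    funext j
    cases j with
    | inl i =>
      simp only [hhvec, hH, Hbar, Matrix.of_apply, Sum.elim_inl, hvq, Pi.smul_apply,
        smul_eq_mul]
      ring
    | inr i => simp [hhvec, hH, Hbar]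
  -- basic quantities
  set a : (Fin np ⊕ Fin nc) → ℝ := fun i => (v i).re with ha
  set b : (Fin np ⊕ Fin nc) → ℝ := fun i => (v i).im with hb
  set N : ℝ := ∑ i, ‖v i‖ ^ 2 with hN'
  have hNab : N = (∑ i, a i ^ 2) + ∑ i, b i ^ 2 := by
    rw [hN', ← Finset.sum_add_distrib]
    apply Finset.sum_congr rfl
    intro i _
    rw [Complex.sq_norm, Complex.normSq_apply, ha, hb]
    simp only
    ring
  have hNpos : 0 < N := by
    obtain ⟨i, hi⟩ := Function.ne_iff.mp hv
    have h1 : 0 < ‖v i‖ ^ 2 :=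
      pow_pos (norm_pos_iff.mpr hi) 2
    have h2 : ∀ j ∈ Finset.univ, (0:ℝ) ≤ ‖v j‖ ^ 2 := fun j _ => sq_nonneg _
    rw [hN']
    exact lt_of_lt_of_le h1
      (Finset.single_le_sum (f := fun j => ‖v j‖ ^ 2) h2 (Finset.mem_univ i))
  have hNnonneg : 0 ≤ N := le_of_lt hNpos
  set s : ℂ := star v ⬝ᵥ (S.map Complex.ofReal *ᵥ v) with hs'
  have hsre : s.re = a ⬝ᵥ (S *ᵥ a) + b ⬝ᵥ (S *ᵥ b) := re_quad S v
  have hspos : 0 < s.re := by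
    rw [hsre]
    have hab : a ≠ 0 ∨ b ≠ 0 := by
      by_contra hcon
      push_neg at hcon
      apply hv
      funext i
      exact Complex.ext (congrFun hcon.1 i) (congrFun hcon.2 i)
    have hSa : 0 ≤ a ⬝ᵥ (S *ᵥ a) := by simpa using hS.posSemidef.dotProduct_mulVec_nonneg a
    have hSb : 0 ≤ b ⬝ᵥ (S *ᵥ b) := by simpa using hS.posSemidef.dotProduct_mulVec_nonneg b
    rcases hab with h | h
    · have := hS.dotProduct_mulVec_pos h; simp only [star_trivial] at this; linarith
    · have := hS.dotProduct_mulVec_pos h; simp only [star_trivial] at this; linarith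
  -- the eigenvalue lower bound
  set lm : ℝ := ⨅ i, hY.1.eigenvalues i with hlm
  have hlmpos : 0 < lm := by
    obtain ⟨i0, hi0⟩ := exists_eq_ciInf_of_finite (f := hY.1.eigenvalues)
    rw [hlm, ← hi0]
    exact hY.eigenvalues_pos i0
  -- main spectral identity
  have hFeq : (Fbar Ap Ac Bp Bc Cc Dc Qp (γ • πstar)) = A + Bm * H := rfl
  rw [hFeq] at hveq
  have hE1 : star v ⬝ᵥ ((S * (A + Bm * H)).map Complex.ofReal *ᵥ v) = μ * s := by
    rw [cmap_mul, ← Matrix.mulVec_mulVec, hveq, Matrix.mulVec_smul, dotProduct_smul,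
      smul_eq_mul]
  have hE2 : star v ⬝ᵥ (((A + Bm * H)ᵀ * S).map Complex.ofReal *ᵥ v)
      = (starRingEnd ℂ) μ * s := by
    rw [cmap_mul, Matrix.transpose_map, ← Matrix.mulVec_mulVec, Matrix.dotProduct_mulVec,
      Matrix.vecMul_transpose, mulVec_star, hveq, star_smul, smul_dotProduct,
      smul_eq_mul]
    rfl
  have hSt : Sᵀ = S := by
    rw [← Matrix.conjTranspose_eq_transpose_of_trivial]; exact hS.1
  have hsplit : (A + Bm * H)ᵀ * S + S * (A + Bm * H)
      = -Y + ((S * (Bm * H))ᵀ + S * (Bm * H)) := by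
    have h1 : (S * (Bm * H))ᵀ = (Bm * H)ᵀ * S := by rw [Matrix.transpose_mul, hSt]
    rw [h1, Matrix.transpose_add, Matrix.add_mul, Matrix.mul_add, ← hLyap]
    abel
  set t : ℂ := star v ⬝ᵥ ((S * (Bm * H)).map Complex.ofReal *ᵥ v) with ht'
  set Yq : ℂ := star v ⬝ᵥ (Y.map Complex.ofReal *ᵥ v) with hYq'
  have hT : ((2 * μ.re : ℝ) : ℂ) * s = -Yq + ((starRingEnd ℂ) t + t) := by
    have e1 : ((starRingEnd ℂ) μ) * s + μ * s = ((2 * μ.re : ℝ) : ℂ) * s := by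
      rw [← add_mul, add_comm, Complex.add_conj]
    rw [← e1, ← hE1, ← hE2, ← dotProduct_add, ← Matrix.add_mulVec, ← cmap_add,
      hsplit, cmap_add, Matrix.add_mulVec, dotProduct_add, cmap_add,
      Matrix.add_mulVec, dotProduct_add, cmap_neg, Matrix.neg_mulVec,
      dotProduct_neg, quad_transpose, ← ht', ← hYq']
  have hre : 2 * μ.re * s.re = -Yq.re + 2 * t.re := by
    have := congrArg Complex.re hT
    rw [Complex.re_ofReal_mul, Complex.add_re, Complex.neg_re, Complex.add_re,
      Complex.conj_re] at this
    linarith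
  -- lower bound on the Y quadratic form
  have hYlb : lm * N ≤ Yq.re := by
    have h1 : Yq.re = a ⬝ᵥ (Y *ᵥ a) + b ⬝ᵥ (Y *ᵥ b) := re_quad Y v
    have h2 := rayleigh_lb hY.1 a
    have h3 := rayleigh_lb hY.1 b
    rw [h1, hNab, mul_add]
    exact add_le_add h2 h3
  -- rank-one structure of the perturbation terms
  have ht : t = (∑ i, (starRingEnd ℂ) (v i) * ((u i : ℝ) : ℂ))
      * (∑ j, ((hvec j : ℝ) : ℂ) * v j) := by
    rw [ht', ← Matrix.mul_assoc]
    exact quad_rank_one (S * Bm) H v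
  set c : ℂ := ∑ j, ((hvec j : ℝ) : ℂ) * v j with hc'
  set d : ℂ := ∑ i, (starRingEnd ℂ) (v i) * ((u i : ℝ) : ℂ) with hd'
  have habs_c : ‖c‖ ≤ evnorm hvec * Real.sqrt N := cs_lemma hvec v
  have habs_d : ‖d‖ ≤ evnorm u * Real.sqrt N := by
    have h1 : d = (starRingEnd ℂ) (∑ i, ((u i : ℝ) : ℂ) * v i) := by
      rw [map_sum]
      apply Finset.sum_congr rfl
      intro i _
      simp [Complex.conj_ofReal, mul_comm]
    rw [h1, Complex.norm_conj]
    exact cs_lemma u v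
  have hnorm_hvec : evnorm hvec = 2 * γ * evnorm q := by
    unfold evnorm
    rw [hHval, Fintype.sum_sum_type]
    simp only [Sum.elim_inl, Sum.elim_inr]
    rw [show (∑ i, (2 * γ * q i) ^ 2) = (2 * γ) ^ 2 * ∑ i, q i ^ 2 by
        rw [Finset.mul_sum]; exact Finset.sum_congr rfl fun i _ => by ring]
    simp only [ne_eq, OfNat.ofNat_ne_zero, not_false_eq_true, zero_pow, Finset.sum_const,
      smul_zero, add_zero]
    rw [Real.sqrt_mul (sq_nonneg _), Real.sqrt_sq (by linarith)]
  have hnorm_u : evnorm u ≤ opNorm (S * Bm) := by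
    have h0 : u = (S * Bm) *ᵥ (fun _ => (1 : ℝ)) := by
      funext i
      simp [hu, mulVec, dotProduct, Fin.sum_univ_one]
    have h1 : evnorm (fun _ : Fin 1 => (1 : ℝ)) = 1 := by simp [evnorm]
    calc evnorm u ≤ opNorm (S * Bm) * evnorm (fun _ : Fin 1 => (1 : ℝ)) := by
          rw [h0]; exact opNorm_mulVec _ _
      _ = opNorm (S * Bm) := by rw [h1, mul_one]
  have hqpos : 0 < evnorm q := by
    unfold evnorm
    apply Real.sqrt_pos.mpr
    obtain ⟨i, hi⟩ := Function.ne_iff.mp hπstar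
    have h1 : 0 < q i ^ 2 := lt_of_le_of_ne (sq_nonneg _) (Ne.symm (pow_ne_zero 2 hi))
    exact lt_of_lt_of_le h1
      (Finset.single_le_sum (f := fun j => q j ^ 2) (fun j _ => sq_nonneg _)
        (Finset.mem_univ i))
  have hopnn : 0 ≤ opNorm (S * Bm) := norm_nonneg _
  have hKpos : 0 < 4 * opNorm (S * Bm) * evnorm q := by
    rcases lt_or_eq_of_le hopnn with hop | hop
    · positivity
    · exfalso
      rw [← hop] at hγ
      simp only [mul_zero, zero_mul, div_zero] at hγ
      linarith
  have hγK : γ * (4 * opNorm (S * Bm) * evnorm q) < lm := (lt_div_iff₀ hKpos).mp hγ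
  have hpert : 2 * t.re ≤ γ * (4 * opNorm (S * Bm) * evnorm q) * N := by
    have h1 : t.re ≤ ‖t‖ := Complex.re_le_norm t
    have h2 : ‖t‖ = ‖d‖ * ‖c‖ := by
      rw [ht]; exact norm_mul d c
    have h3 : ‖d‖ * ‖c‖
        ≤ (evnorm u * Real.sqrt N) * (evnorm hvec * Real.sqrt N) :=
      mul_le_mul habs_d habs_c (norm_nonneg _)
        (mul_nonneg (evnorm_nonneg _) (Real.sqrt_nonneg _))
    have h4 : Real.sqrt N * Real.sqrt N = N := Real.mul_self_sqrt hNnonneg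
    calc 2 * t.re ≤ 2 * (‖d‖ * ‖c‖) := by rw [← h2]; linarith
      _ ≤ 2 * ((evnorm u * Real.sqrt N) * (evnorm hvec * Real.sqrt N)) := by linarith
      _ = 2 * evnorm u * evnorm hvec * N := by
          linear_combination (2 * evnorm u * evnorm hvec) * h4
      _ = 2 * evnorm u * (2 * γ * evnorm q) * N := by rw [hnorm_hvec]
      _ ≤ 2 * opNorm (S * Bm) * (2 * γ * evnorm q) * N := by
          have hstep : evnorm u * (4 * γ * evnorm q * N)
              ≤ opNorm (S * Bm) * (4 * γ * evnorm q * N) :=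
            mul_le_mul_of_nonneg_right hnorm_u
              (mul_nonneg (mul_nonneg (mul_nonneg (by norm_num) hγ0.le) hqpos.le) hNnonneg)
          nlinarith [hstep]
      _ = γ * (4 * opNorm (S * Bm) * evnorm q) * N := by ring
  have hfinal : 2 * μ.re * s.re < 0 := by
    rw [hre]
    nlinarith [hYlb, hpert, hγK, hNpos]
  nlinarith [hspos, hfinal]
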